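/- Let Y be an n×q real matrix with compact singular value decomposition Y = U D Vᵀ, where V has orthonormal columns spanning the row space of Y. For fixed n×n symmetric matrices D_0, ..., D_K, if (Σ̃_0, ..., Σ̃_K) minimizes ∑_{i,l} ‖(YV)_{i,:}ᵀ (YV)_{l,:} − ∑_k [D_k]_{i,l} Σ_k‖_F² over PSD matrices Σ_k, then (V Σ̃_0 Vᵀ, ..., V Σ̃_K Vᵀ) minimizes the analogous objective ∑_{i,l} ‖Y_{i,:}ᵀ Y_{l,:} − ∑_k [D_k]_{i,l} Σ_k‖_F² over PSD q×q matrices Σ_k. -/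
import Mathlib

open Matrix BigOperators

/-- Squared Frobenius norm of a real matrix. -/
def frobSq {m n : ℕ} (A : Matrix (Fin m) (Fin n) ℝ) : ℝ := ∑ i, ∑ j, (A i j) ^ 2

/-- The mvREHE objective `∑_{i,l} ‖Y_{i,:}ᵀ Y_{l,:} − ∑_k [D_k]_{i,l} Σ_k‖_F²`. -/
def mvObj {n q K : ℕ} (Y : Matrix (Fin n) (Fin q) ℝ)
    (D : Fin (K + 1) → Matrix (Fin n) (Fin n) ℝ)
    (Sig : Fin (K + 1) → Matrix (Fin q) (Fin q) ℝ) : ℝ :=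
  ∑ i, ∑ l, frobSq (Matrix.of (fun a b => Y i a * Y l b) - ∑ k, D k i l • Sig k)

lemma frobSq_nonneg {m n : ℕ} (A : Matrix (Fin m) (Fin n) ℝ) : 0 ≤ frobSq A :=
  Finset.sum_nonneg fun _ _ => Finset.sum_nonneg fun _ _ => sq_nonneg _

lemma frobSq_eq_trace {m n : ℕ} (A : Matrix (Fin m) (Fin n) ℝ) :
    frobSq A = (A * Aᵀ).trace := by
  simp [frobSq, Matrix.trace, Matrix.mul_apply, Matrix.diag, sq]

lemma frobSq_conj {q r : ℕ} (V : Matrix (Fin q) (Fin r) ℝ) (hV : Vᵀ * V = 1)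
    (A : Matrix (Fin r) (Fin r) ℝ) : frobSq (V * A * Vᵀ) = frobSq A := by
  rw [frobSq_eq_trace, frobSq_eq_trace]
  have h : (V * A * Vᵀ) * (V * A * Vᵀ)ᵀ = V * (A * Aᵀ) * Vᵀ := by
    rw [Matrix.transpose_mul, Matrix.transpose_mul, Matrix.transpose_transpose]
    calc V * A * Vᵀ * (Vᵀᵀ * (Aᵀ * Vᵀ))
        = V * (A * ((Vᵀ * V) * (Aᵀ * Vᵀ))) := by
          rw [Matrix.transpose_transpose]; simp only [Matrix.mul_assoc]
      _ = V * (A * Aᵀ) * Vᵀ := by rw [hV, Matrix.one_mul]; simp only [Matrix.mul_assoc]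
  rw [h, Matrix.trace_mul_cycle, ← Matrix.mul_assoc, hV, Matrix.one_mul]

lemma frobSq_proj {q : ℕ} (P X : Matrix (Fin q) (Fin q) ℝ) (hPt : Pᵀ = P)
    (hPP : P * P = P) : frobSq (P * X * P) ≤ frobSq X := by
  set B := P * X * P with hB
  have hBt : Bᵀ = P * Xᵀ * P := by
    rw [hB, Matrix.transpose_mul, Matrix.transpose_mul, hPt, Matrix.mul_assoc]
  have h1 : (B * Bᵀ).trace = (X * Bᵀ).trace := by
    rw [hBt, hB]
    have e1 : P * X * P * (P * Xᵀ * P) = P * (X * P * Xᵀ * P) := by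
      calc P * X * P * (P * Xᵀ * P) = P * (X * ((P * P) * (Xᵀ * P))) := by
            simp only [Matrix.mul_assoc]
        _ = P * (X * P * Xᵀ * P) := by rw [hPP]; simp only [Matrix.mul_assoc]
    have e2 : X * (P * Xᵀ * P) = X * P * Xᵀ * P := by simp only [Matrix.mul_assoc]
    rw [e1, e2, Matrix.trace_mul_comm]
    congr 1
    simp only [Matrix.mul_assoc]
    rw [hPP]
  have h2 : (B * Xᵀ).trace = (X * Bᵀ).trace := by
    rw [← Matrix.trace_transpose (B * Xᵀ), Matrix.transpose_mul, Matrix.transpose_transpose,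
      Matrix.trace_mul_comm]
  have h3 : frobSq (X - B) = frobSq X - frobSq B := by
    rw [frobSq_eq_trace, frobSq_eq_trace, frobSq_eq_trace]
    have e : (X - B) * (X - B)ᵀ = X * Xᵀ - X * Bᵀ - B * Xᵀ + B * Bᵀ := by
      rw [Matrix.transpose_sub, Matrix.sub_mul, Matrix.mul_sub, Matrix.mul_sub]
      abel
    rw [e, Matrix.trace_add, Matrix.trace_sub, Matrix.trace_sub, h1, h2]
    ring
  have h4 := frobSq_nonneg (X - B)
  linarith

/-- if `Y = U D Vᵀ` is a compact SVD (`V` with orthonormal columns), and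
`(Σ̃_k)` minimizes the mvREHE objective for the data matrix `Y V` over tuples of PSD
matrices, then `(V Σ̃_k Vᵀ)` minimizes the analogous objective for `Y` over tuples of
PSD `q × q` matrices. -/
theorem stmt4 {n q r K : ℕ}
    (Y : Matrix (Fin n) (Fin q) ℝ)
    (U : Matrix (Fin n) (Fin r) ℝ) (s : Fin r → ℝ) (V : Matrix (Fin q) (Fin r) ℝ)
    (hSVD : Y = U * Matrix.diagonal s * Vᵀ)
    (hV : Vᵀ * V = 1)
    (D : Fin (K + 1) → Matrix (Fin n) (Fin n) ℝ)
    (hD : ∀ k, (D k).IsSymm)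
    (Stilde : Fin (K + 1) → Matrix (Fin r) (Fin r) ℝ)
    (hStildePSD : ∀ k, (Stilde k).PosSemidef)
    (hStildeMin : ∀ Sig : Fin (K + 1) → Matrix (Fin r) (Fin r) ℝ,
      (∀ k, (Sig k).PosSemidef) → mvObj (Y * V) D Stilde ≤ mvObj (Y * V) D Sig) :
    (∀ k, (V * Stilde k * Vᵀ).PosSemidef) ∧
    ∀ Sig : Fin (K + 1) → Matrix (Fin q) (Fin q) ℝ,
      (∀ k, (Sig k).PosSemidef) →
      mvObj Y D (fun k => V * Stilde k * Vᵀ) ≤ mvObj Y D Sig := by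
  have hYP : Y * (V * Vᵀ) = Y := by
    rw [hSVD]
    calc U * Matrix.diagonal s * Vᵀ * (V * Vᵀ)
        = U * (Matrix.diagonal s * ((Vᵀ * V) * Vᵀ)) := by simp only [Matrix.mul_assoc]
      _ = U * Matrix.diagonal s * Vᵀ := by rw [hV, Matrix.one_mul, Matrix.mul_assoc]
  set P : Matrix (Fin q) (Fin q) ℝ := V * Vᵀ with hP
  have hPt : Pᵀ = P := by rw [hP, Matrix.transpose_mul, Matrix.transpose_transpose]
  have hPP : P * P = P := by
    rw [hP]
    calc V * Vᵀ * (V * Vᵀ) = V * ((Vᵀ * V) * Vᵀ) := by simp only [Matrix.mul_assoc]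
      _ = V * Vᵀ := by rw [hV, Matrix.one_mul]
  have hrow : ∀ (i : Fin n) (a : Fin q), ∑ t, V a t * (Y * V) i t = Y i a := by
    intro i a
    conv_rhs => rw [← hYP]
    rw [← Matrix.mul_assoc]
    rw [Matrix.mul_apply]
    exact Finset.sum_congr rfl fun t _ => by rw [Matrix.transpose_apply, mul_comm]
  have hM : ∀ (i l : Fin n),
      (Matrix.of (fun a b => Y i a * Y l b) : Matrix (Fin q) (Fin q) ℝ)
        = V * (Matrix.of (fun a b => (Y * V) i a * (Y * V) l b)) * Vᵀ := by
    intro i l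
    ext a b
    rw [Matrix.mul_apply]
    simp only [Matrix.mul_apply, Matrix.of_apply, Matrix.transpose_apply]
    have inner_eq : ∀ u, (∑ t, V a t * ((Y * V) i t * (Y * V) l u))
        = Y i a * (Y * V) l u := by
      intro u
      rw [← hrow i a, Finset.sum_mul]
      exact Finset.sum_congr rfl fun t _ => (mul_assoc _ _ _).symm
    calc Y i a * Y l b = Y i a * ∑ u, (Y * V) l u * V b u := by
          rw [show (∑ u, (Y * V) l u * V b u) = Y l b from by
            rw [← hrow l b]; exact Finset.sum_congr rfl fun u _ => mul_comm _ _]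
      _ = ∑ u, (∑ t, V a t * ((Y * V) i t * (Y * V) l u)) * V b u := by
          rw [Finset.mul_sum]
          exact Finset.sum_congr rfl fun u _ => by rw [inner_eq u, mul_assoc]
  -- pulling V, Vᵀ out of the inner matrix
  have hInner : ∀ (i l : Fin n) (T : Fin (K + 1) → Matrix (Fin r) (Fin r) ℝ),
      (Matrix.of (fun a b => Y i a * Y l b) : Matrix (Fin q) (Fin q) ℝ)
          - ∑ k, D k i l • (V * T k * Vᵀ)
        = V * ((Matrix.of (fun a b => (Y * V) i a * (Y * V) l b))
            - ∑ k, D k i l • T k) * Vᵀ := by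
    intro i l T
    rw [hM i l, Matrix.mul_sub, Matrix.sub_mul, Matrix.mul_sum, Matrix.sum_mul]
    congr 1
    exact Finset.sum_congr rfl fun k _ => by
      rw [Matrix.mul_smul, Matrix.smul_mul]
  have hB : ∀ T : Fin (K + 1) → Matrix (Fin r) (Fin r) ℝ,
      mvObj Y D (fun k => V * T k * Vᵀ) = mvObj (Y * V) D T := by
    intro T
    unfold mvObj
    refine Finset.sum_congr rfl fun i _ => Finset.sum_congr rfl fun l _ => ?_
    rw [hInner i l T, frobSq_conj V hV]
  have hC : ∀ Sig : Fin (K + 1) → Matrix (Fin q) (Fin q) ℝ,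
      mvObj (Y * V) D (fun k => Vᵀ * Sig k * V) ≤ mvObj Y D Sig := by
    intro Sig
    have h0 : mvObj (Y * V) D (fun k => Vᵀ * Sig k * V)
        = mvObj Y D (fun k => P * Sig k * P) := by
      rw [← hB]
      unfold mvObj
      refine Finset.sum_congr rfl fun i _ => Finset.sum_congr rfl fun l _ => ?_
      congr 2
      refine Finset.sum_congr rfl fun k _ => ?_
      congr 1
      rw [hP]
      simp only [Matrix.mul_assoc]
    rw [h0]
    unfold mvObj
    refine Finset.sum_le_sum fun i _ => Finset.sum_le_sum fun l _ => ?_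
    have key : (Matrix.of (fun a b => Y i a * Y l b) : Matrix (Fin q) (Fin q) ℝ)
          - ∑ k, D k i l • (P * Sig k * P)
        = P * ((Matrix.of (fun a b => Y i a * Y l b) : Matrix (Fin q) (Fin q) ℝ)
            - ∑ k, D k i l • Sig k) * P := by
      rw [Matrix.mul_sub, Matrix.sub_mul, Matrix.mul_sum, Matrix.sum_mul]
      congr 1
      · rw [hM i l, hP]
        calc V * Matrix.of (fun a b => (Y*V) i a * (Y*V) l b) * Vᵀ
            = V * Vᵀ * (V * (Matrix.of (fun a b => (Y*V) i a * (Y*V) l b) * (Vᵀ * (V * Vᵀ)))) := by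
              rw [show Vᵀ * (V * Vᵀ) = Vᵀ from by rw [← Matrix.mul_assoc, hV, Matrix.one_mul]]
              simp only [Matrix.mul_assoc]
              rw [show Vᵀ * (V * (Matrix.of (fun a b => (Y*V) i a * (Y*V) l b) * Vᵀ))
                  = Matrix.of (fun a b => (Y*V) i a * (Y*V) l b) * Vᵀ from by
                rw [← Matrix.mul_assoc, ← Matrix.mul_assoc, hV, Matrix.one_mul]]
          _ = V * Vᵀ * (V * Matrix.of (fun a b => (Y*V) i a * (Y*V) l b) * Vᵀ) * (V * Vᵀ) := by
              simp only [Matrix.mul_assoc]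
      · exact Finset.sum_congr rfl fun k _ => by
          rw [Matrix.mul_smul, Matrix.smul_mul]
    rw [key]
    exact frobSq_proj P _ hPt hPP
  refine ⟨fun k => ?_, fun Sig hSig => ?_⟩
  · have h := (hStildePSD k).mul_mul_conjTranspose_same V
    rwa [Matrix.conjTranspose_eq_transpose_of_trivial] at h
  · calc mvObj Y D (fun k => V * Stilde k * Vᵀ) = mvObj (Y * V) D Stilde := hB Stilde
      _ ≤ mvObj (Y * V) D (fun k => Vᵀ * Sig k * V) := by
          refine hStildeMin _ fun k => ?_
          have h := (hSig k).conjTranspose_mul_mul_same V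
          rwa [Matrix.conjTranspose_eq_transpose_of_trivial] at h
      _ ≤ mvObj Y D Sig := hC Sig
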